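/- Let $\Omega \subset \mathbb{R}^d$ be a bounded open set and let $(f_k)_k$ be a sequence of measurable functions $\Omega \to \mathbb{R}^m$ converging pointwise Lebesgue-a.e.\ to a function $f$. Then there exists a nondecreasing function $\psi_0 : [0,\infty) \to [0,\infty)$ with $\lim_{s\to+\infty}\psi_0(s) = +\infty$ such that $\sup_k \int_\Omega \psi_0(|f_k(x)|)\,dx < +\infty$. -/

import Mathlib

open MeasureTheory Filter
open scoped ENNReal

/-- For a sequence of measurable functions converging a.e. on a bounded open set, there exists
a nondecreasing function `ψ₀` diverging at `+∞` such that `∫_Ω ψ₀(|f_k|)` is uniformly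
bounded. -/
theorem exists_superlinear_bound (d m : ℕ) (Ω : Set (Fin d → ℝ))
    (hΩo : IsOpen Ω) (hΩb : Bornology.IsBounded Ω)
    (f : ℕ → (Fin d → ℝ) → EuclideanSpace ℝ (Fin m)) (hf : ∀ k, Measurable (f k))
    (F : (Fin d → ℝ) → EuclideanSpace ℝ (Fin m))
    (hconv : ∀ᵐ x ∂(volume.restrict Ω), Tendsto (fun k => f k x) atTop (nhds (F x))) :
    ∃ ψ₀ : ℝ → ℝ, Monotone ψ₀ ∧ (∀ s : ℝ, 0 ≤ s → 0 ≤ ψ₀ s) ∧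
      Tendsto ψ₀ atTop atTop ∧
      ∃ C : ℝ≥0∞, C ≠ ⊤ ∧ ∀ k, ∫⁻ x in Ω, ENNReal.ofReal (ψ₀ ‖f k x‖) ≤ C := by
  set μ := volume.restrict Ω with hμdef
  have hfin : IsFiniteMeasure μ := by
    constructor
    rw [hμdef, Measure.restrict_apply_univ]
    exact hΩb.measure_lt_top
  -- the limit is a.e. measurable; replace it by a measurable representative
  have hFm : AEMeasurable F μ :=
    aemeasurable_of_tendsto_metrizable_ae atTop (fun k => (hf k).aemeasurable) hconv
  set G := hFm.mk F with hGdef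
  have hGm : Measurable G := hFm.measurable_mk
  have hconv' : ∀ᵐ x ∂μ, Tendsto (fun k => f k x) atTop (nhds (G x)) := by
    filter_upwards [hconv, hFm.ae_eq_mk] with x h1 h2
    rwa [h2] at h1
  have hTIM : TendstoInMeasure μ f atTop G :=
    tendstoInMeasure_of_tendsto_ae (fun k => (hf k).aestronglyMeasurable) hconv'
  -- tail bound for a single a.e. measurable function
  have tail : ∀ (g : (Fin d → ℝ) → EuclideanSpace ℝ (Fin m)), Measurable g →
      ∀ ε : ℝ≥0∞, ε ≠ 0 → ∃ t : ℝ, μ {x | t < ‖g x‖} ≤ ε := by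
    intro g hg ε hε
    have hs : ∀ n : ℕ, NullMeasurableSet {x | (n : ℝ) < ‖g x‖} μ := fun n =>
      (measurableSet_lt measurable_const hg.norm).nullMeasurableSet
    have hmono : Antitone fun n : ℕ => {x | (n : ℝ) < ‖g x‖} := by
      intro a b hab x hx
      simp only [Set.mem_setOf_eq] at hx ⊢
      exact lt_of_le_of_lt (by exact_mod_cast hab) hx
    have hempty : ⋂ n : ℕ, {x | (n : ℝ) < ‖g x‖} = ∅ := by
      ext x
      simp only [Set.mem_iInter, Set.mem_setOf_eq, Set.mem_empty_iff_false, iff_false, not_forall,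
        not_lt]
      obtain ⟨n, hn⟩ := exists_nat_gt ‖g x‖
      exact ⟨n, hn.le⟩
    have htend := tendsto_measure_iInter_atTop hs hmono ⟨0, (measure_lt_top μ _).ne⟩
    rw [hempty, measure_empty] at htend
    have := (htend.eventually (gt_mem_nhds (pos_iff_ne_zero.mpr hε))).exists
    obtain ⟨n, hn⟩ := this
    exact ⟨n, hn.le⟩
  -- uniform tightness of the sequence
  have tight : ∀ ε : ℝ≥0∞, ε ≠ 0 → ∃ t : ℝ, ∀ k, μ {x | t < ‖f k x‖} ≤ ε := by
    intro ε hε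
    have hε2 : (ε / 2) ≠ 0 := by
      simp [ENNReal.div_eq_zero_iff, hε]
    obtain ⟨t₁, ht₁⟩ := tail G hGm (ε / 2) hε2
    have h1 := hTIM 1 one_pos
    obtain ⟨K, hK⟩ := eventually_atTop.mp
      (h1.eventually (gt_mem_nhds (pos_iff_ne_zero.mpr hε2)))
    choose tk htk using fun k => tail (f k) (hf k) ε hε
    set M : ℕ := (Finset.range K).sup fun k => ⌈tk k⌉₊ with hMdef
    refine ⟨max (t₁ + 1) M, fun k => ?_⟩
    rcases lt_or_ge k K with hk | hk
    · refine le_trans (measure_mono ?_) (htk k)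
      intro x hx
      have h1 : tk k ≤ (M : ℝ) := by
        refine le_trans (Nat.le_ceil _) ?_
        exact_mod_cast Finset.le_sup (f := fun k => ⌈tk k⌉₊) (Finset.mem_range.2 hk)
      exact lt_of_le_of_lt (h1.trans (le_max_right _ _)) hx
    · have hsub : {x | max (t₁ + 1) (M : ℝ) < ‖f k x‖} ⊆
          {x | (1 : ℝ) ≤ dist (f k x) (G x)} ∪ {x | t₁ < ‖G x‖} := by
        intro x hx
        by_contra hcon
        simp only [Set.mem_union, Set.mem_setOf_eq, not_or, not_le, not_lt] at hcon
        have hx' : max (t₁ + 1) (M : ℝ) < ‖f k x‖ := hx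
        have h2 : ‖f k x‖ - ‖G x‖ ≤ dist (f k x) (G x) := by
          rw [dist_eq_norm]
          exact norm_sub_norm_le _ _
        have := le_max_left (t₁ + 1) (M : ℝ)
        linarith [hcon.1, hcon.2]
      calc μ {x | max (t₁ + 1) (M : ℝ) < ‖f k x‖}
          ≤ μ {x | (1 : ℝ) ≤ dist (f k x) (G x)} + μ {x | t₁ < ‖G x‖} :=
            le_trans (measure_mono hsub) (measure_union_le _ _)
        _ ≤ ε / 2 + ε / 2 := add_le_add (by
            refine le_trans (measure_mono ?_) (hK k hk).le
            intro x hx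
            simp only [Set.mem_setOf_eq, edist_dist] at hx ⊢
            exact ENNReal.one_le_ofReal.mpr hx) ht₁
        _ = ε := ENNReal.add_halves ε
  -- choose the thresholds
  have hexists : ∀ j : ℕ, ∃ t : ℝ, (j : ℝ) ≤ t ∧
      ∀ k, μ {x | t < ‖f k x‖} ≤ (2⁻¹ : ℝ≥0∞) ^ j := by
    intro j
    obtain ⟨t, htj⟩ := tight ((2⁻¹ : ℝ≥0∞) ^ j)
      (pow_ne_zero j (ENNReal.inv_ne_zero.mpr (by norm_num)))
    refine ⟨max t j, le_max_right _ _, fun k => le_trans (measure_mono ?_) (htj k)⟩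
    intro x hx
    simp only [Set.mem_setOf_eq] at hx ⊢
    exact lt_of_le_of_lt (le_max_left _ _) hx
  choose t ht1 ht2 using hexists
  -- the counting function
  set g : ℝ → ℝ≥0∞ := fun s => ∑' j : ℕ, if t j < s then 1 else 0 with hgdef
  have hfins : ∀ s : ℝ, g s ≤ (⌈s⌉₊ : ℝ≥0∞) := by
    intro s
    have heq : g s = ∑ j ∈ Finset.range ⌈s⌉₊, if t j < s then (1 : ℝ≥0∞) else 0 := by
      refine tsum_eq_sum ?_
      intro j hj
      rw [if_neg]
      push_neg
      have hj' : (⌈s⌉₊ : ℝ) ≤ j := by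
        exact_mod_cast Nat.le_of_not_lt fun h => hj (Finset.mem_range.2 h)
      exact le_trans (le_trans (Nat.le_ceil s) hj') (ht1 j)
    rw [heq]
    calc ∑ j ∈ Finset.range ⌈s⌉₊, (if t j < s then (1 : ℝ≥0∞) else 0)
        ≤ ∑ _j ∈ Finset.range ⌈s⌉₊, (1 : ℝ≥0∞) :=
          Finset.sum_le_sum fun j _ => by split <;> simp
      _ = (⌈s⌉₊ : ℝ≥0∞) := by simp
  have hne : ∀ s, g s ≠ ⊤ := fun s =>
    (lt_of_le_of_lt (hfins s) (ENNReal.natCast_lt_top _)).ne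
  have hgm : Monotone g := by
    intro a b hab
    refine ENNReal.tsum_le_tsum fun j => ?_
    by_cases h : t j < a
    · rw [if_pos h, if_pos (h.trans_le hab)]
    · rw [if_neg h]; exact zero_le
  refine ⟨fun s => (g s).toReal, ?_, fun s _ => ENNReal.toReal_nonneg, ?_,
    ∑' j : ℕ, (2⁻¹ : ℝ≥0∞) ^ j, ?_, fun k => ?_⟩
  · exact fun a b hab => ENNReal.toReal_mono (hne b) (hgm hab)
  · rw [tendsto_atTop_atTop]
    intro b
    refine ⟨((Finset.range ⌈b⌉₊).sup fun j => ⌈t j⌉₊ : ℕ) + 1, fun s hs => ?_⟩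
    have hlow : (⌈b⌉₊ : ℝ≥0∞) ≤ g s := by
      calc (⌈b⌉₊ : ℝ≥0∞) = ∑ _j ∈ Finset.range ⌈b⌉₊, (1 : ℝ≥0∞) := by simp
        _ ≤ ∑ j ∈ Finset.range ⌈b⌉₊, (if t j < s then (1 : ℝ≥0∞) else 0) := by
            refine Finset.sum_le_sum fun j hj => ?_
            rw [if_pos]
            have h1 : t j ≤ (((Finset.range ⌈b⌉₊).sup fun j => ⌈t j⌉₊ : ℕ) : ℝ) := by
              refine le_trans (Nat.le_ceil _) ?_
              exact_mod_cast Finset.le_sup (f := fun j => ⌈t j⌉₊) hj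
            linarith
        _ ≤ g s := ENNReal.sum_le_tsum _
    calc b ≤ (⌈b⌉₊ : ℝ) := Nat.le_ceil b
      _ = ((⌈b⌉₊ : ℝ≥0∞)).toReal := by simp
      _ ≤ (g s).toReal := ENNReal.toReal_mono (hne s) hlow
  · rw [ENNReal.tsum_geometric, ENNReal.one_sub_inv_two]
    simp
  · have hSm : ∀ j : ℕ, MeasurableSet {x : Fin d → ℝ | t j < ‖f k x‖} := fun j =>
      measurableSet_lt measurable_const (hf k).norm
    have hind : ∀ j : ℕ, (fun x : Fin d → ℝ => if t j < ‖f k x‖ then (1 : ℝ≥0∞) else 0) =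
        {x : Fin d → ℝ | t j < ‖f k x‖}.indicator 1 := by
      intro j
      funext x
      simp [Set.indicator_apply]
    calc ∫⁻ x in Ω, ENNReal.ofReal ((g ‖f k x‖).toReal)
        = ∫⁻ x in Ω, ∑' j : ℕ, (if t j < ‖f k x‖ then (1 : ℝ≥0∞) else 0) := by
          refine lintegral_congr fun x => ?_
          rw [ENNReal.ofReal_toReal (hne _)]
      _ = ∑' j : ℕ, ∫⁻ x in Ω, (if t j < ‖f k x‖ then (1 : ℝ≥0∞) else 0) := by
          refine lintegral_tsum fun j => ?_
          rw [hind j]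
          exact (measurable_one.indicator (hSm j)).aemeasurable
      _ ≤ ∑' j : ℕ, (2⁻¹ : ℝ≥0∞) ^ j := by
          refine ENNReal.tsum_le_tsum fun j => ?_
          rw [hind j, lintegral_indicator_one (hSm j)]
          exact ht2 j k
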